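/- arXiv:math/0108090 — 3 statements merged into one kernel-verified Lean document; each statement's English description precedes it below -/
import Mathlib

section
/- Let f : [a,b] → ℝ be a regulated function (one-sided limits f(t-) and f(t+) exist at every point) and let 0 < p < ∞. Then the sum of the p-th powers of the jumps of f is bounded by its p-variation: ∑_{t ∈ (a,b]} |f(t) - f(t-)|^p + ∑_{t ∈ [a,b)} |f(t+) - f(t)|^p ≤ v_p(f;[a,b]). -/
open Function Set Filter Topology

lemma partition_of_finset (a b : ℝ) (hab : a < b) (P : Finset ℝ)
    (ha : a ∈ P) (hb : b ∈ P) (hP : ↑P ⊆ Set.Icc a b) :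
    ∃ n : ℕ, ∃ t : ℕ → ℝ, t 0 = a ∧ t n = b ∧ (∀ i < n, t i < t (i + 1)) ∧
      ∀ x y : ℝ, x ∈ P → y ∈ P → x < y → (∀ z ∈ P, ¬(x < z ∧ z < y)) →
        ∃ i < n, t i = x ∧ t (i + 1) = y := by
  set m := P.card with hm
  have hm1 : 1 ≤ m := Finset.card_pos.2 ⟨a, ha⟩
  set n := m - 1 with hn
  have hnm : n < m := by omega
  set e := P.orderIsoOfFin (rfl : P.card = m) with he
  have hmin : ∀ i : ℕ, min i n < m := fun i => lt_of_le_of_lt (min_le_right _ _) hnm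
  refine ⟨n, fun i => (e ⟨min i n, hmin i⟩ : ℝ), ?_, ?_, ?_, ?_⟩
  · -- t 0 = a
    have h1 : (e ⟨min 0 n, hmin 0⟩ : ℝ) ∈ (P : Set ℝ) := (e _).2
    have h2 : a ≤ (e ⟨min 0 n, hmin 0⟩ : ℝ) := (hP h1).1
    have h3 : (e ⟨min 0 n, hmin 0⟩ : ℝ) ≤ a := by
      have := e.symm ⟨a, ha⟩
      have h4 : e ⟨min 0 n, hmin 0⟩ ≤ e (e.symm ⟨a, ha⟩) := by
        apply e.monotone
        simp [Fin.le_def]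
      simpa using Subtype.coe_le_coe.mpr h4
    linarith
  · -- t n = b
    have h1 : (e ⟨min n n, hmin n⟩ : ℝ) ∈ (P : Set ℝ) := (e _).2
    have h2 : (e ⟨min n n, hmin n⟩ : ℝ) ≤ b := (hP h1).2
    have h3 : b ≤ (e ⟨min n n, hmin n⟩ : ℝ) := by
      have h4 : e (e.symm ⟨b, hb⟩) ≤ e ⟨min n n, hmin n⟩ := by
        apply e.monotone
        simp only [Fin.le_def]
        have := (e.symm ⟨b, hb⟩).2
        omega
      simpa using Subtype.coe_le_coe.mpr h4
    linarith
  · intro i hi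
    have : e ⟨min i n, hmin i⟩ < e ⟨min (i+1) n, hmin (i+1)⟩ := by
      apply e.strictMono
      simp only [Fin.lt_def]
      omega
    exact_mod_cast this
  · intro x y hx hy hxy hbetween
    set i := e.symm ⟨x, hx⟩ with hi
    set j := e.symm ⟨y, hy⟩ with hj
    have hij : i < j := by
      have : e i < e j := by
        simp only [hi, hj, OrderIso.apply_symm_apply]
        exact hxy
      exact e.lt_iff_lt.1 this
    have hjn : (j : ℕ) ≤ n := by have := j.2; omega
    have hin : (i : ℕ) < n := by
      have : (i : ℕ) < (j : ℕ) := hij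
      omega
    refine ⟨i, hin, ?_, ?_⟩
    · have heq : (⟨min i n, hmin i⟩ : Fin m) = i := by
        ext; simp; omega
      have h5 := congrArg (fun k => (e k : ℝ)) heq
      show (e ⟨min i n, hmin i⟩ : ℝ) = x
      rw [h5]
      have : e i = ⟨x, hx⟩ := by simp [hi]
      rw [this]
    · have hmem : ((⟨min (i+1) n, hmin (i+1)⟩ : Fin m) : ℕ) = (i:ℕ)+1 := by simp; omega
      set k : Fin m := ⟨min ((i:ℕ)+1) n, hmin ((i:ℕ)+1)⟩ with hk
      have h1 : x < (e k : ℝ) := by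
        have : i < k := by rw [Fin.lt_def, hmem]; omega
        have h2 : e i < e k := e.strictMono this
        have : e i = ⟨x, hx⟩ := by simp [hi]
        rw [this] at h2
        exact_mod_cast h2
      have h2 : (e k : ℝ) ≤ y := by
        have : k ≤ j := by rw [Fin.le_def, hmem]; omega
        have h2 : e k ≤ e j := e.monotone this
        have : e j = ⟨y, hy⟩ := by simp [hj]
        rw [this] at h2
        exact_mod_cast h2
      have hmem2 : (e k : ℝ) ∈ P := (e k).2
      rcases eq_or_lt_of_le h2 with h | h
      · exact h
      · exact absurd ⟨h1, h⟩ (hbetween _ hmem2)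

set_option maxHeartbeats 1000000 in
lemma jump_sum_approx (a b : ℝ) (hab : a < b) (f : ℝ → ℝ) (p : ℝ) (hp : 0 < p)
    (hleft : ∀ t ∈ Set.Ioc a b, Tendsto f (𝓝[<] t) (𝓝 (leftLim f t)))
    (hright : ∀ t ∈ Set.Ico a b, Tendsto f (𝓝[>] t) (𝓝 (rightLim f t)))
    (S T : Finset ℝ) (hS : ↑S ⊆ Set.Ioc a b) (hT : ↑T ⊆ Set.Ico a b)
    (ε : ℝ) (hε : 0 < ε) :
    ∃ n : ℕ, ∃ t : ℕ → ℝ, t 0 = a ∧ t n = b ∧ (∀ i < n, t i < t (i + 1)) ∧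
      ∑ x ∈ S, |f x - leftLim f x| ^ p + ∑ x ∈ T, |rightLim f x - f x| ^ p ≤
        ∑ i ∈ Finset.range n, |f (t (i + 1)) - f (t i)| ^ p + ε := by
  classical
  set δ : ℝ := ε / (S.card + T.card + 1) with hδdef
  have hδ : 0 < δ := by positivity
  set M : Finset ℝ := insert a (insert b (S ∪ T)) with hMdef
  have haM : a ∈ M := Finset.mem_insert_self _ _
  have hbM : b ∈ M := Finset.mem_insert_of_mem (Finset.mem_insert_self _ _)
  have hSM : ∀ x ∈ S, x ∈ M := fun x hx =>
    Finset.mem_insert_of_mem (Finset.mem_insert_of_mem (Finset.mem_union_left _ hx))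
  have hTM : ∀ x ∈ T, x ∈ M := fun x hx =>
    Finset.mem_insert_of_mem (Finset.mem_insert_of_mem (Finset.mem_union_right _ hx))
  have hM : ↑M ⊆ Set.Icc a b := by
    intro x hx
    simp only [hMdef, Finset.coe_insert, Set.mem_insert_iff, Finset.coe_union,
      Set.mem_union, Finset.mem_coe] at hx
    rcases hx with rfl | rfl | h | h
    · exact ⟨le_refl _, hab.le⟩
    · exact ⟨hab.le, le_refl _⟩
    · exact ⟨(hS h).1.le, (hS h).2⟩
    · exact ⟨(hT h).1, (hT h).2.le⟩
  -- nearest marked point below / above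
  set c' : ℝ → ℝ := fun t => (insert a (M.filter (fun x => x < t))).max'
    (Finset.insert_nonempty _ _) with hc'def
  set d' : ℝ → ℝ := fun t => (insert b (M.filter (fun x => t < x))).min'
    (Finset.insert_nonempty _ _) with hd'def
  have hc'a : ∀ t, a ≤ c' t := fun t => Finset.le_max' _ _ (Finset.mem_insert_self _ _)
  have hc'lt : ∀ t, a < t → c' t < t := by
    intro t ht
    apply (Finset.max'_lt_iff _ _).2
    intro y hy
    rcases Finset.mem_insert.1 hy with rfl | hy
    · exact ht
    · exact (Finset.mem_filter.1 hy).2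
  have hc'le : ∀ x ∈ M, ∀ t, x < t → x ≤ c' t := by
    intro x hx t hxt
    apply Finset.le_max'
    apply Finset.mem_insert_of_mem
    simp only [Finset.mem_filter]
    exact ⟨hx, hxt⟩
  have hd'b : ∀ t, d' t ≤ b := fun t => Finset.min'_le _ _ (Finset.mem_insert_self _ _)
  have hd'gt : ∀ t, t < b → t < d' t := by
    intro t ht
    apply (Finset.lt_min'_iff _ _).2
    intro y hy
    rcases Finset.mem_insert.1 hy with rfl | hy
    · exact ht
    · exact (Finset.mem_filter.1 hy).2
  have hd'ge : ∀ x ∈ M, ∀ t, t < x → d' t ≤ x := by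
    intro x hx t hxt
    apply Finset.min'_le
    apply Finset.mem_insert_of_mem
    simp only [Finset.mem_filter]
    exact ⟨hx, hxt⟩
  clear_value c' d'
  clear hc'def hd'def
  -- choose left approximation points
  have hskey : ∀ t : ℝ, ∃ s : ℝ, t ∈ S → ((c' t + t)/2 < s ∧ s < t ∧
      |f t - leftLim f t| ^ p ≤ |f t - f s| ^ p + δ) := by
    intro t
    by_cases ht : t ∈ S
    · have htI := hS ht
      have hct : c' t < t := hc'lt t htI.1
      have h1 : Tendsto (fun s => |f t - f s| ^ p) (𝓝[<] t) (𝓝 (|f t - leftLim f t| ^ p)) :=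
        (Real.continuousAt_rpow_const _ p (Or.inr hp.le)).tendsto.comp
          ((tendsto_const_nhds.sub (hleft t htI)).abs)
      have h3 : ∀ᶠ s in 𝓝[<] t, |f t - leftLim f t| ^ p - δ < |f t - f s| ^ p :=
        h1.eventually (eventually_gt_nhds (by linarith))
      have h5 : ∀ᶠ s in 𝓝[<] t, s ∈ Set.Ioo ((c' t + t)/2) t :=
        Ioo_mem_nhdsLT_of_mem ⟨by linarith, le_refl t⟩
      obtain ⟨s, hs1, hs2⟩ := (h3.and h5).exists
      exact ⟨s, fun _ => ⟨hs2.1, hs2.2, by linarith⟩⟩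
    · exact ⟨0, fun h => absurd h ht⟩
  choose sf hsf using hskey
  -- choose right approximation points
  have hukey : ∀ t : ℝ, ∃ u : ℝ, t ∈ T → (t < u ∧ u < (t + d' t)/2 ∧
      |rightLim f t - f t| ^ p ≤ |f u - f t| ^ p + δ) := by
    intro t
    by_cases ht : t ∈ T
    · have htI := hT ht
      have hdt : t < d' t := hd'gt t htI.2
      have h1 : Tendsto (fun u => |f u - f t| ^ p) (𝓝[>] t) (𝓝 (|rightLim f t - f t| ^ p)) :=
        (Real.continuousAt_rpow_const _ p (Or.inr hp.le)).tendsto.comp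
          (((hright t htI).sub tendsto_const_nhds).abs)
      have h3 : ∀ᶠ u in 𝓝[>] t, |rightLim f t - f t| ^ p - δ < |f u - f t| ^ p :=
        h1.eventually (eventually_gt_nhds (by linarith))
      have h5 : ∀ᶠ u in 𝓝[>] t, u ∈ Set.Ioo t ((t + d' t)/2) :=
        Ioo_mem_nhdsGT_of_mem ⟨le_refl t, by linarith⟩
      obtain ⟨u, hu1, hu2⟩ := (h3.and h5).exists
      exact ⟨u, fun _ => ⟨hu2.1, hu2.2, by linarith⟩⟩
    · exact ⟨0, fun h => absurd h ht⟩
  choose uf huf using hukey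
  -- the partition point set
  set P : Finset ℝ := (M ∪ S.image sf) ∪ T.image uf with hPdef
  have haP : a ∈ P := Finset.mem_union_left _ (Finset.mem_union_left _ haM)
  have hbP : b ∈ P := Finset.mem_union_left _ (Finset.mem_union_left _ hbM)
  have hMP : ∀ x ∈ M, x ∈ P := fun x hx =>
    Finset.mem_union_left _ (Finset.mem_union_left _ hx)
  have hsfP : ∀ t ∈ S, sf t ∈ P := fun t ht =>
    Finset.mem_union_left _ (Finset.mem_union_right _ (Finset.mem_image_of_mem _ ht))
  have hufP : ∀ t ∈ T, uf t ∈ P := fun t ht =>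
    Finset.mem_union_right _ (Finset.mem_image_of_mem _ ht)
  -- basic bounds on sf, uf
  have hsfc' : ∀ t ∈ S, c' t < sf t := by
    intro t ht
    have h1 := (hsf t ht).1
    have h2 := hc'lt t (hS ht).1
    linarith
  have hufd' : ∀ t ∈ T, uf t < d' t := by
    intro t ht
    have h1 := (huf t ht).2.1
    have h2 := hd'gt t (hT ht).2
    linarith
  have hsfnotM : ∀ t ∈ S, sf t ∉ M := by
    intro t ht hmem
    have := hc'le _ hmem t (hsf t ht).2.1
    have := hsfc' t ht
    linarith
  have hufnotM : ∀ t ∈ T, uf t ∉ M := by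
    intro t ht hmem
    have := hd'ge _ hmem t (huf t ht).1
    have := hufd' t ht
    linarith
  have hP : ↑P ⊆ Set.Icc a b := by
    intro x hx
    simp only [hPdef, Finset.coe_union, Set.mem_union, Finset.coe_image,
      Set.mem_image, Finset.mem_coe] at hx
    rcases hx with (hx | ⟨t, ht, rfl⟩) | ⟨t, ht, rfl⟩
    · exact hM hx
    · constructor
      · have := hc'a t; have := hsfc' t ht; linarith
      · have := (hsf t ht).2.1; have := (hS ht).2; linarith
    · constructor
      · have := (huf t ht).1; have := (hT ht).1; linarith
      · have := hd'b t; have := hufd' t ht; linarith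
  -- membership case analysis
  have hPcases : ∀ z ∈ P, z ∈ M ∨ (∃ t ∈ S, sf t = z) ∨ (∃ t ∈ T, uf t = z) := by
    intro z hz
    rw [hPdef] at hz
    rcases Finset.mem_union.1 hz with hz | hz
    · rcases Finset.mem_union.1 hz with hz | hz
      · exact Or.inl hz
      · obtain ⟨t, ht, rfl⟩ := Finset.mem_image.1 hz
        exact Or.inr (Or.inl ⟨t, ht, rfl⟩)
    · obtain ⟨t, ht, rfl⟩ := Finset.mem_image.1 hz
      exact Or.inr (Or.inr ⟨t, ht, rfl⟩)
  -- consecutiveness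
  have hconsS : ∀ t ∈ S, ∀ z ∈ P, ¬(sf t < z ∧ z < t) := by
    intro t ht z hz ⟨h1, h2⟩
    have hsf1 := (hsf t ht).1
    have hsf2 := (hsf t ht).2.1
    have hct := hc'lt t (hS ht).1
    rcases hPcases z hz with hzM | ⟨t'', ht'', rfl⟩ | ⟨t'', ht'', rfl⟩
    · have := hc'le z hzM t h2
      linarith
    · rcases lt_trichotomy t'' t with h | rfl | h
      · have h3 : t'' ≤ c' t := hc'le t'' (hSM t'' ht'') t h
        have h4 := (hsf t'' ht'').2.1
        linarith
      · exact absurd h1 (lt_irrefl _)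
      · have h3 : t ≤ c' t'' := hc'le t (hSM t ht) t'' h
        have h4 := (hsf t'' ht'').1
        linarith
    · rcases lt_or_ge t'' t with h | h
      · have h3 : t'' ≤ c' t := hc'le t'' (hTM t'' ht'') t h
        have h4 : d' t'' ≤ t := hd'ge t (hSM t ht) t'' h
        have h5 := (huf t'' ht'').2.1
        linarith
      · have h5 := (huf t'' ht'').1
        linarith
  have hconsT : ∀ t ∈ T, ∀ z ∈ P, ¬(t < z ∧ z < uf t) := by
    intro t ht z hz ⟨h1, h2⟩
    have huf1 := (huf t ht).1
    have huf2 := (huf t ht).2.1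
    have hdt := hd'gt t (hT ht).2
    rcases hPcases z hz with hzM | ⟨t'', ht'', rfl⟩ | ⟨t'', ht'', rfl⟩
    · have := hd'ge z hzM t h1
      linarith
    · rcases le_or_gt t'' t with h | h
      · have h3 := (hsf t'' ht'').2.1
        linarith
      · have h3 : d' t ≤ t'' := hd'ge t'' (hSM t'' ht'') t h
        have h4 : t ≤ c' t'' := hc'le t (hTM t ht) t'' h
        have h5 := (hsf t'' ht'').1
        linarith
    · rcases lt_trichotomy t'' t with h | rfl | h
      · have h3 : d' t'' ≤ t := hd'ge t (hTM t ht) t'' h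
        have h4 := (huf t'' ht'').1
        have h5 := (huf t'' ht'').2.1
        linarith
      · exact absurd h2 (lt_irrefl _)
      · have h3 : d' t ≤ t'' := hd'ge t'' (hTM t'' ht'') t h
        have h4 := (huf t'' ht'').1
        linarith
  -- get the partition
  obtain ⟨n, tseq, ht0, htn, htmono, hkey⟩ := partition_of_finset a b hab P haP hbP hP
  refine ⟨n, tseq, ht0, htn, htmono, ?_⟩
  -- index functions
  have hiSkey : ∀ t : ℝ, ∃ i : ℕ, t ∈ S → (i < n ∧ tseq i = sf t ∧ tseq (i + 1) = t) := by
    intro t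
    by_cases ht : t ∈ S
    · obtain ⟨i, hi, h1, h2⟩ := hkey (sf t) t (hsfP t ht) (hMP t (hSM t ht))
        (hsf t ht).2.1 (fun z hz => hconsS t ht z hz)
      exact ⟨i, fun _ => ⟨hi, h1, h2⟩⟩
    · exact ⟨0, fun h => absurd h ht⟩
  choose iS hiS using hiSkey
  have hiTkey : ∀ t : ℝ, ∃ i : ℕ, t ∈ T → (i < n ∧ tseq i = t ∧ tseq (i + 1) = uf t) := by
    intro t
    by_cases ht : t ∈ T
    · obtain ⟨i, hi, h1, h2⟩ := hkey t (uf t) (hMP t (hTM t ht)) (hufP t ht)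
        (huf t ht).1 (fun z hz => hconsT t ht z hz)
      exact ⟨i, fun _ => ⟨hi, h1, h2⟩⟩
    · exact ⟨0, fun h => absurd h ht⟩
  choose iT hiT using hiTkey
  set g : ℕ → ℝ := fun i => |f (tseq (i + 1)) - f (tseq i)| ^ p with hgdef
  have hg0 : ∀ i, 0 ≤ g i := fun i => Real.rpow_nonneg (abs_nonneg _) p
  -- injectivity
  have hinjS : Set.InjOn iS ↑S := by
    intro x hx y hy hxy
    have h1 := (hiS x hx).2.2
    have h2 := (hiS y hy).2.2
    rw [← h1, ← h2, hxy]
  have hinjT : Set.InjOn iT ↑T := by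
    intro x hx y hy hxy
    have h1 := (hiT x hx).2.1
    have h2 := (hiT y hy).2.1
    rw [← h1, ← h2, hxy]
  have hdisj : Disjoint (S.image iS) (T.image iT) := by
    rw [Finset.disjoint_left]
    rintro i hi1 hi2
    obtain ⟨x, hx, rfl⟩ := Finset.mem_image.1 hi1
    obtain ⟨y, hy, hxy⟩ := Finset.mem_image.1 hi2
    have h1 : tseq (iS x) = sf x := (hiS x hx).2.1
    have h2 : tseq (iT y) = y := (hiT y hy).2.1
    rw [hxy, h1] at h2
    exact hsfnotM x hx (h2 ▸ hTM y hy)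
  have hsub : S.image iS ∪ T.image iT ⊆ Finset.range n := by
    intro i hi
    rcases Finset.mem_union.1 hi with hi | hi
    · obtain ⟨x, hx, rfl⟩ := Finset.mem_image.1 hi
      exact Finset.mem_range.2 (hiS x hx).1
    · obtain ⟨x, hx, rfl⟩ := Finset.mem_image.1 hi
      exact Finset.mem_range.2 (hiT x hx).1
  -- the sum chain
  have hchain1 : ∑ x ∈ S, |f x - leftLim f x| ^ p ≤ ∑ x ∈ S, (g (iS x) + δ) := by
    apply Finset.sum_le_sum
    intro x hx
    have h1 := (hsf x hx).2.2
    have h2 : g (iS x) = |f x - f (sf x)| ^ p := by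
      rw [hgdef]
      simp only
      rw [(hiS x hx).2.1, (hiS x hx).2.2]
    rw [h2]; exact h1
  have hchain2 : ∑ x ∈ T, |rightLim f x - f x| ^ p ≤ ∑ x ∈ T, (g (iT x) + δ) := by
    apply Finset.sum_le_sum
    intro x hx
    have h1 := (huf x hx).2.2
    have h2 : g (iT x) = |f (uf x) - f x| ^ p := by
      rw [hgdef]
      simp only
      rw [(hiT x hx).2.1, (hiT x hx).2.2]
    rw [h2]; exact h1
  have himgS : ∑ x ∈ S, g (iS x) = ∑ i ∈ S.image iS, g i :=
    (Finset.sum_image (fun x hx y hy h => hinjS hx hy h)).symm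
  have himgT : ∑ x ∈ T, g (iT x) = ∑ i ∈ T.image iT, g i :=
    (Finset.sum_image (fun x hx y hy h => hinjT hx hy h)).symm
  have hunion : ∑ i ∈ S.image iS, g i + ∑ i ∈ T.image iT, g i
      = ∑ i ∈ S.image iS ∪ T.image iT, g i := (Finset.sum_union hdisj).symm
  have hbig : ∑ i ∈ S.image iS ∪ T.image iT, g i ≤ ∑ i ∈ Finset.range n, g i :=
    Finset.sum_le_sum_of_subset_of_nonneg hsub (fun i _ _ => hg0 i)
  have hδsum : (S.card + T.card : ℝ) * δ ≤ ε := by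
    have h1 : (0:ℝ) < (S.card + T.card + 1 : ℝ) := by positivity
    have h2 : (0:ℝ) ≤ (S.card + T.card : ℝ) := by positivity
    rw [hδdef, mul_div_assoc', div_le_iff₀ h1]
    nlinarith
  calc ∑ x ∈ S, |f x - leftLim f x| ^ p + ∑ x ∈ T, |rightLim f x - f x| ^ p
      ≤ ∑ x ∈ S, (g (iS x) + δ) + ∑ x ∈ T, (g (iT x) + δ) := add_le_add hchain1 hchain2
    _ = (∑ x ∈ S, g (iS x) + ∑ x ∈ T, g (iT x)) + (S.card + T.card : ℝ) * δ := by
        rw [Finset.sum_add_distrib, Finset.sum_add_distrib]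
        simp [Finset.sum_const, nsmul_eq_mul]
        ring
    _ ≤ ∑ i ∈ Finset.range n, g i + ε := by
        rw [himgS, himgT, hunion]
        exact add_le_add hbig hδsum
    _ = ∑ i ∈ Finset.range n, |f (tseq (i + 1)) - f (tseq i)| ^ p + ε := rfl

/-- for a regulated function `f` on `[a,b]` and `0 < p < ∞`, the sum of the
`p`-th powers of the jumps of `f` is bounded by its `p`-variation (taken in `[0,∞]`). -/
theorem jump_sum_le_pVariation (a b : ℝ) (hab : a < b) (f : ℝ → ℝ) (p : ℝ) (hp : 0 < p)
    (hleft : ∀ t ∈ Set.Ioc a b, Tendsto f (𝓝[<] t) (𝓝 (leftLim f t)))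
    (hright : ∀ t ∈ Set.Ico a b, Tendsto f (𝓝[>] t) (𝓝 (rightLim f t))) :
    (∑' t : Set.Ioc a b, ENNReal.ofReal (|f ↑t - leftLim f ↑t| ^ p)) +
      (∑' t : Set.Ico a b, ENNReal.ofReal (|rightLim f ↑t - f ↑t| ^ p)) ≤
    ⨆ (n : ℕ) (t : ℕ → ℝ) (_ : t 0 = a) (_ : t n = b) (_ : ∀ i < n, t i < t (i + 1)),
      ENNReal.ofReal (∑ i ∈ Finset.range n, |f (t (i + 1)) - f (t i)| ^ p) := by
  classical
  rw [ENNReal.tsum_eq_iSup_sum, ENNReal.tsum_eq_iSup_sum]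
  refine ENNReal.iSup_add_iSup_le ?_
  intro S T
  set S' : Finset ℝ := S.image Subtype.val with hS'def
  set T' : Finset ℝ := T.image Subtype.val with hT'def
  have hS' : ↑S' ⊆ Set.Ioc a b := by
    intro x hx
    rw [hS'def, Finset.coe_image] at hx
    obtain ⟨y, _, rfl⟩ := hx
    exact y.2
  have hT' : ↑T' ⊆ Set.Ico a b := by
    intro x hx
    rw [hT'def, Finset.coe_image] at hx
    obtain ⟨y, _, rfl⟩ := hx
    exact y.2
  have hsumS : ∑ x ∈ S, ENNReal.ofReal (|f ↑x - leftLim f ↑x| ^ p)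
      = ENNReal.ofReal (∑ x ∈ S', |f x - leftLim f x| ^ p) := by
    rw [hS'def, Finset.sum_image (fun x _ y _ h => Subtype.val_injective h)]
    rw [ENNReal.ofReal_sum_of_nonneg (fun i _ => Real.rpow_nonneg (abs_nonneg _) p)]
  have hsumT : ∑ x ∈ T, ENNReal.ofReal (|rightLim f ↑x - f ↑x| ^ p)
      = ENNReal.ofReal (∑ x ∈ T', |rightLim f x - f x| ^ p) := by
    rw [hT'def, Finset.sum_image (fun x _ y _ h => Subtype.val_injective h)]
    rw [ENNReal.ofReal_sum_of_nonneg (fun i _ => Real.rpow_nonneg (abs_nonneg _) p)]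
  rw [hsumS, hsumT]
  have hA : 0 ≤ ∑ x ∈ S', |f x - leftLim f x| ^ p :=
    Finset.sum_nonneg (fun i _ => Real.rpow_nonneg (abs_nonneg _) p)
  have hB : 0 ≤ ∑ x ∈ T', |rightLim f x - f x| ^ p :=
    Finset.sum_nonneg (fun i _ => Real.rpow_nonneg (abs_nonneg _) p)
  rw [← ENNReal.ofReal_add hA hB]
  apply ENNReal.le_of_forall_pos_le_add
  intro ε hε _
  obtain ⟨n, t, h0, hn, hmono, hineq⟩ := jump_sum_approx a b hab f p hp hleft hright
    S' T' hS' hT' ε (by exact_mod_cast hε)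
  calc ENNReal.ofReal (∑ x ∈ S', |f x - leftLim f x| ^ p + ∑ x ∈ T', |rightLim f x - f x| ^ p)
      ≤ ENNReal.ofReal (∑ i ∈ Finset.range n, |f (t (i + 1)) - f (t i)| ^ p + ε) :=
        ENNReal.ofReal_le_ofReal hineq
    _ ≤ ENNReal.ofReal (∑ i ∈ Finset.range n, |f (t (i + 1)) - f (t i)| ^ p)
          + ENNReal.ofReal ε := ENNReal.ofReal_add_le
    _ ≤ (⨆ (n : ℕ) (t : ℕ → ℝ) (_ : t 0 = a) (_ : t n = b) (_ : ∀ i < n, t i < t (i + 1)),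
          ENNReal.ofReal (∑ i ∈ Finset.range n, |f (t (i + 1)) - f (t i)| ^ p)) + ↑ε := by
        apply add_le_add
        · apply le_iSup_of_le n
          apply le_iSup_of_le t
          apply le_iSup_of_le h0
          apply le_iSup_of_le hn
          apply le_iSup_of_le hmono
          exact le_refl _
        · rw [ENNReal.ofReal_coe_nnreal]
end

section
/- Let f : [a,b] → ℝ be a function of bounded p-variation for some 0 < p < ∞ (hence regulated), and let x ∈ (a,b]. Then lim_{z↑x} v_p(f;[z,x]) = |f(x) - f(x-)|^p. Similarly, for y ∈ [a,b), lim_{z↓y} v_p(f;[y,z]) = |f(y+) - f(y)|^p. -/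
open Function Set Filter Topology
open scoped ENNReal

/-- The `p`-variation of `f` on `[u,v]`, as a supremum in `[0,∞]` over all partitions
`u = t 0 < t 1 < ⋯ < t n = v`. -/
noncomputable def vpE (p : ℝ) (f : ℝ → ℝ) (u v : ℝ) : ℝ≥0∞ :=
  ⨆ (n : ℕ) (t : ℕ → ℝ) (_ : t 0 = u) (_ : t n = v) (_ : ∀ i < n, t i < t (i + 1)),
    ENNReal.ofReal (∑ i ∈ Finset.range n, |f (t (i + 1)) - f (t i)| ^ p)

private lemma sum_range_split {M : Type*} [AddCommMonoid M] (g : ℕ → M) (m n : ℕ) :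
    ∑ i ∈ Finset.range (m + n), g i
      = (∑ i ∈ Finset.range m, g i) + ∑ i ∈ Finset.range n, g (m + i) := by
  induction n with
  | zero => simp
  | succ k ih =>
      rw [← Nat.add_assoc, Finset.sum_range_succ, ih, Finset.sum_range_succ, add_assoc]

private lemma part_mono {t : ℕ → ℝ} {n : ℕ} (h : ∀ i < n, t i < t (i + 1)) :
    ∀ {i j : ℕ}, i ≤ j → j ≤ n → t i ≤ t j := by
  intro i j hij hjn
  induction j with
  | zero =>
      obtain rfl : i = 0 := Nat.le_zero.mp hij
      exact le_rfl
  | succ k ih =>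
      rcases Nat.lt_or_ge i (k + 1) with h' | h'
      · exact (ih (Nat.lt_succ_iff.mp h') (Nat.le_of_succ_le hjn)).trans (h k hjn).le
      · obtain rfl : i = k + 1 := le_antisymm hij h'
        exact le_rfl

private lemma vpSum_nonneg (p : ℝ) (f : ℝ → ℝ) (t : ℕ → ℝ) (n : ℕ) :
    0 ≤ ∑ i ∈ Finset.range n, |f (t (i + 1)) - f (t i)| ^ p :=
  Finset.sum_nonneg fun _ _ => Real.rpow_nonneg (abs_nonneg _) p

private lemma le_vpE (p : ℝ) (f : ℝ → ℝ) (u v : ℝ) (n : ℕ) (t : ℕ → ℝ) (h1 : t 0 = u)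
    (h2 : t n = v) (h3 : ∀ i < n, t i < t (i + 1)) :
    ENNReal.ofReal (∑ i ∈ Finset.range n, |f (t (i + 1)) - f (t i)| ^ p) ≤ vpE p f u v :=
  le_iSup_of_le n <| le_iSup_of_le t <| le_iSup_of_le h1 <| le_iSup_of_le h2 <|
    le_iSup_of_le h3 le_rfl

private lemma vpE_le {p : ℝ} {f : ℝ → ℝ} {u v : ℝ} {c : ℝ≥0∞}
    (h : ∀ (n : ℕ) (t : ℕ → ℝ), t 0 = u → t n = v → (∀ i < n, t i < t (i + 1)) →
      ENNReal.ofReal (∑ i ∈ Finset.range n, |f (t (i + 1)) - f (t i)| ^ p) ≤ c) :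
    vpE p f u v ≤ c :=
  iSup_le fun n => iSup_le fun t => iSup_le fun h1 => iSup_le fun h2 => iSup_le fun h3 =>
    h n t h1 h2 h3

private lemma single_le_vpE (p : ℝ) (f : ℝ → ℝ) {u v : ℝ} (huv : u < v) :
    ENNReal.ofReal (|f v - f u| ^ p) ≤ vpE p f u v := by
  have h := le_vpE p f u v 1 (fun i => if i = 0 then u else v) (by simp) (by simp) ?_
  · simpa using h
  · intro i hi
    obtain rfl : i = 0 := Nat.lt_one_iff.mp hi
    simpa using huv

private lemma vpE_self (p : ℝ) (f : ℝ → ℝ) (u : ℝ) : vpE p f u u = 0 := by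
  refine le_antisymm (vpE_le ?_) zero_le
  intro n t h1 h2 h3
  cases n with
  | zero => simp
  | succ k =>
      have h4 : t 0 < t (k + 1) :=
        lt_of_le_of_lt (part_mono h3 (Nat.zero_le k) (Nat.le_succ k)) (h3 k (Nat.lt_succ_self k))
      rw [h1, h2] at h4
      exact absurd h4 (lt_irrefl u)

/-- Predicate: `q` is a partition of `[u,v]`. -/
def IsPart (u v : ℝ) (q : ℕ × (ℕ → ℝ)) : Prop :=
  q.2 0 = u ∧ q.2 q.1 = v ∧ ∀ i < q.1, q.2 i < q.2 (i + 1)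

private lemma vpE_eq_biSup (p : ℝ) (f : ℝ → ℝ) (u v : ℝ) :
    vpE p f u v = ⨆ (q : ℕ × (ℕ → ℝ)) (_ : IsPart u v q),
      ENNReal.ofReal (∑ i ∈ Finset.range q.1, |f (q.2 (i + 1)) - f (q.2 i)| ^ p) := by
  refine le_antisymm (vpE_le fun n t h1 h2 h3 => ?_)
    (iSup₂_le fun q hq => le_vpE p f u v q.1 q.2 hq.1 hq.2.1 hq.2.2)
  exact le_iSup₂_of_le (n, t) ⟨h1, h2, h3⟩ le_rfl

private lemma vpE_superadd (p : ℝ) (f : ℝ → ℝ) {u v w : ℝ} (huv : u < v) (hvw : v < w) :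
    vpE p f u v + vpE p f v w ≤ vpE p f u w := by
  rw [vpE_eq_biSup p f u v, vpE_eq_biSup p f v w]
  refine ENNReal.biSup_add_biSup_le'
    ⟨(1, fun i => if i = 0 then u else v),
      by refine ⟨by simp, by simp, fun i hi => ?_⟩
         obtain rfl : i = 0 := Nat.lt_one_iff.mp hi
         simpa using huv⟩
    ⟨(1, fun i => if i = 0 then v else w),
      by refine ⟨by simp, by simp, fun i hi => ?_⟩
         obtain rfl : i = 0 := Nat.lt_one_iff.mp hi
         simpa using hvw⟩ ?_
  rintro ⟨m, s⟩ ⟨hs0, hsm, hs⟩ ⟨n, t⟩ ⟨ht0, htn, ht⟩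
  dsimp only at hs0 hsm hs ht0 htn ht ⊢
  have hm : 0 < m := by
    rcases Nat.eq_zero_or_pos m with rfl | h
    · exact absurd (hs0.symm.trans hsm) huv.ne
    · exact h
  have hn : 0 < n := by
    rcases Nat.eq_zero_or_pos n with rfl | h
    · exact absurd (ht0.symm.trans htn) hvw.ne
    · exact h
  set c : ℕ → ℝ := fun i => if i ≤ m then s i else t (i - m) with hcdef
  have hcs : ∀ i ≤ m, c i = s i := fun i hi => if_pos hi
  have hct : ∀ j ≤ n, c (m + j) = t j := by
    intro j hjn
    rcases Nat.eq_zero_or_pos j with rfl | hj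
    · simp only [hcdef, Nat.add_zero, if_pos (le_refl m)]
      rw [hsm, ht0]
    · have h' : ¬ (m + j ≤ m) := by omega
      simp only [hcdef]
      rw [if_neg h', Nat.add_sub_cancel_left]
  have h1 : c 0 = u := by rw [hcs 0 (Nat.zero_le m)]; exact hs0
  have h2 : c (m + n) = w := by rw [hct n le_rfl]; exact htn
  have h3 : ∀ i < m + n, c i < c (i + 1) := by
    intro i hi
    rcases Nat.lt_or_ge i m with h' | h'
    · rw [hcs i h'.le, hcs (i + 1) h']
      exact hs i h'
    · obtain ⟨j, rfl⟩ : ∃ j, i = m + j := ⟨i - m, by omega⟩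
      have hj : j < n := by omega
      rw [hct j hj.le, Nat.add_assoc, hct (j + 1) hj]
      exact ht j hj
  have hsum : ∑ i ∈ Finset.range (m + n), |f (c (i + 1)) - f (c i)| ^ p
      = (∑ i ∈ Finset.range m, |f (s (i + 1)) - f (s i)| ^ p)
        + ∑ i ∈ Finset.range n, |f (t (i + 1)) - f (t i)| ^ p := by
    rw [sum_range_split]
    congr 1
    · refine Finset.sum_congr rfl fun i hi => ?_
      have hi' := Finset.mem_range.mp hi
      rw [hcs i hi'.le, hcs (i + 1) hi']
    · refine Finset.sum_congr rfl fun j hj => ?_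
      have hj' := Finset.mem_range.mp hj
      rw [Nat.add_assoc, hct (j + 1) hj', hct j hj'.le]
  calc ENNReal.ofReal (∑ i ∈ Finset.range m, |f (s (i + 1)) - f (s i)| ^ p)
        + ENNReal.ofReal (∑ i ∈ Finset.range n, |f (t (i + 1)) - f (t i)| ^ p)
      = ENNReal.ofReal (∑ i ∈ Finset.range (m + n), |f (c (i + 1)) - f (c i)| ^ p) := by
        rw [hsum, ENNReal.ofReal_add (vpSum_nonneg p f s m) (vpSum_nonneg p f t n)]
    _ ≤ vpE p f u w := le_vpE p f u w (m + n) c h1 h2 h3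

private lemma vpE_last (p : ℝ) (f : ℝ → ℝ) {z x : ℝ} (hzx : z < x) :
    vpE p f z x ≤ ⨆ u ∈ Set.Ico z x, (vpE p f z u + ENNReal.ofReal (|f x - f u| ^ p)) := by
  refine vpE_le fun n t h1 h2 h3 => ?_
  cases n with
  | zero => exact absurd (h1.symm.trans h2) hzx.ne
  | succ k =>
      have hu : t k ∈ Set.Ico z x := by
        constructor
        · rw [← h1]; exact part_mono h3 (Nat.zero_le k) (Nat.le_succ k)
        · rw [← h2]; exact h3 k (Nat.lt_succ_self k)
      refine le_trans ?_ (le_iSup₂_of_le (t k) hu le_rfl)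
      rw [Finset.sum_range_succ,
        ENNReal.ofReal_add (vpSum_nonneg p f t k) (Real.rpow_nonneg (abs_nonneg _) p)]
      refine add_le_add (le_vpE p f z (t k) k t h1 rfl fun i hi => h3 i (Nat.lt_succ_of_lt hi))
        (le_of_eq (by rw [h2]))

private lemma vpE_neg_le (p : ℝ) (f : ℝ → ℝ) (u v : ℝ) :
    vpE p f u v ≤ vpE p (fun t => f (-t)) (-v) (-u) := by
  refine vpE_le fun n t h1 h2 h3 => ?_
  have key := le_vpE p (fun t => f (-t)) (-v) (-u) n (fun i => -t (n - i))
    (by simp [h2]) (by simp [h1]) ?_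
  · refine le_trans (le_of_eq ?_) key
    congr 1
    rw [← Finset.sum_range_reflect (fun j => |f (t (j + 1)) - f (t j)| ^ p) n]
    refine Finset.sum_congr rfl fun i hi => ?_
    have hi' := Finset.mem_range.mp hi
    have e1 : n - 1 - i + 1 = n - i := by omega
    have e2 : n - 1 - i = n - (i + 1) := by omega
    simp only [neg_neg]
    rw [e1, e2, abs_sub_comm]
  · intro i hi
    have e : n - (i + 1) + 1 = n - i := by omega
    have h4 := h3 (n - (i + 1)) (by omega)
    rw [e] at h4
    simpa using neg_lt_neg h4

private lemma vpE_neg (p : ℝ) (f : ℝ → ℝ) (u v : ℝ) :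
    vpE p (fun t => f (-t)) (-v) (-u) = vpE p f u v := by
  refine le_antisymm ?_ (vpE_neg_le p f u v)
  have h := vpE_neg_le p (fun t => f (-t)) (-v) (-u)
  simpa [neg_neg] using h

private lemma main_left (a x : ℝ) (hax : a < x) (f : ℝ → ℝ) (p : ℝ) (hp : 0 < p)
    (hbv : vpE p f a x < ⊤) :
    ∃ c : ℝ, Tendsto f (𝓝[<] x) (𝓝 c) ∧
      Tendsto (fun z => vpE p f z x) (𝓝[<] x) (𝓝 (ENNReal.ofReal (|f x - c| ^ p))) := by
  set V : ℝ → ℝ≥0∞ := fun z => vpE p f a z with hV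
  set L : ℝ≥0∞ := ⨆ z ∈ Set.Ioo a x, V z with hL
  have hVle : ∀ z ∈ Set.Ioo a x, V z ≤ vpE p f a x := fun z hz =>
    le_trans le_self_add (vpE_superadd p f hz.1 hz.2)
  have hLle : L ≤ vpE p f a x := by rw [hL]; exact iSup₂_le hVle
  have hLtop : L ≠ ⊤ := (lt_of_le_of_lt hLle hbv).ne
  have hVtop : ∀ z ∈ Set.Ioo a x, V z ≠ ⊤ := fun z hz => (lt_of_le_of_lt (hVle z hz) hbv).ne
  have hVL : ∀ z ∈ Set.Ioo a x, V z ≤ L := by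
    intro z hz
    rw [hL]
    exact le_iSup₂ (f := fun z (_ : z ∈ Set.Ioo a x) => V z) z hz
  have hkey : ∀ {z u : ℝ}, z ∈ Set.Ioo a x → u < x → z < u → vpE p f z u ≤ L - V z := by
    intro z u hz hu hzu
    have h1 : V z + vpE p f z u ≤ V u := vpE_superadd p f hz.1 hzu
    have h2 : V u ≤ L := hVL u ⟨hz.1.trans hzu, hu⟩
    exact ENNReal.le_sub_of_add_le_left (hVtop z hz) (h1.trans h2)
  have hIoo : Set.Ioo a x ∈ 𝓝[<] x := Ioo_mem_nhdsLT_of_mem ⟨hax, le_rfl⟩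
  have htendV : Tendsto V (𝓝[<] x) (𝓝 L) := by
    rw [tendsto_order]
    constructor
    · intro e he
      rw [hL] at he
      obtain ⟨z₀, hz₀, hez₀⟩ : ∃ z₀ ∈ Set.Ioo a x, e < V z₀ := by
        simpa [lt_iSup_iff] using he
      have hmem : Set.Ioo z₀ x ∈ 𝓝[<] x := Ioo_mem_nhdsLT_of_mem ⟨hz₀.2, le_rfl⟩
      filter_upwards [hmem] with z hz
      calc e < V z₀ := hez₀
        _ ≤ V z₀ + vpE p f z₀ z := le_self_add
        _ ≤ V z := vpE_superadd p f hz₀.1 hz.1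
    · intro e he
      filter_upwards [hIoo] with z hz
      exact lt_of_le_of_lt (hVL z hz) he
  have htendD : Tendsto (fun z => L - V z) (𝓝[<] x) (𝓝 0) := by
    simpa using ENNReal.Tendsto.sub (tendsto_const_nhds (x := L)) htendV (Or.inl hLtop)
  have hcauchy : Cauchy (map f (𝓝[<] x)) := by
    refine Metric.cauchy_iff.2 ⟨map_neBot, ?_⟩
    intro ε hε
    have hεp : (0 : ℝ≥0∞) < ENNReal.ofReal ((ε / 2) ^ p) :=
      ENNReal.ofReal_pos.2 (Real.rpow_pos_of_pos (by linarith) p)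
    have hev : ∀ᶠ z in 𝓝[<] x, L - V z < ENNReal.ofReal ((ε / 2) ^ p) :=
      (tendsto_order.1 htendD).2 _ hεp
    obtain ⟨z₀, hz₀D, hz₀mem⟩ := (hev.and (eventually_of_mem hIoo fun z hz => hz)).exists
    refine ⟨f '' Set.Ioo z₀ x, image_mem_map (Ioo_mem_nhdsLT hz₀mem.2), ?_⟩
    have key : ∀ {y1 y2 : ℝ}, y1 ∈ Set.Ioo z₀ x → y2 ∈ Set.Ioo z₀ x → y1 < y2 →
        dist (f y1) (f y2) ≤ ε / 2 := by
      intro y1 y2 hy1 hy2 h12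
      have hy1m : y1 ∈ Set.Ioo a x := ⟨hz₀mem.1.trans hy1.1, hy1.2⟩
      have hb : ENNReal.ofReal (|f y2 - f y1| ^ p) ≤ L - V z₀ := by
        calc ENNReal.ofReal (|f y2 - f y1| ^ p) ≤ vpE p f y1 y2 := single_le_vpE p f h12
          _ ≤ L - V y1 := hkey hy1m hy2.2 h12
          _ ≤ L - V z₀ :=
            tsub_le_tsub_left (le_trans le_self_add (vpE_superadd p f hz₀mem.1 hy1.1)) L
      have hle : |f y2 - f y1| ^ p ≤ (ε / 2) ^ p :=
        (ENNReal.ofReal_le_ofReal_iff (Real.rpow_nonneg (by linarith) p)).1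
          (hb.trans hz₀D.le)
      have habs : |f y2 - f y1| ≤ ε / 2 :=
        (Real.rpow_le_rpow_iff (abs_nonneg _) (by linarith) hp).1 hle
      rw [Real.dist_eq, abs_sub_comm]
      exact habs
    rintro _ ⟨y1, hy1, rfl⟩ _ ⟨y2, hy2, rfl⟩
    rcases lt_trichotomy y1 y2 with h | h | h
    · exact lt_of_le_of_lt (key hy1 hy2 h) (by linarith)
    · simp [h, hε]
    · rw [dist_comm]
      exact lt_of_le_of_lt (key hy2 hy1 h) (by linarith)
  obtain ⟨c, hc⟩ := CompleteSpace.complete hcauchy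
  refine ⟨c, hc, ?_⟩
  have hT : Tendsto (fun z => ENNReal.ofReal (|f x - f z| ^ p)) (𝓝[<] x)
      (𝓝 (ENNReal.ofReal (|f x - c| ^ p))) := by
    have h1 : Tendsto (fun z => |f x - f z|) (𝓝[<] x) (𝓝 |f x - c|) :=
      (tendsto_const_nhds.sub hc).abs
    have h2 : ContinuousAt (fun y : ℝ => ENNReal.ofReal (y ^ p)) |f x - c| :=
      ENNReal.continuous_ofReal.continuousAt.comp
        (Real.continuousAt_rpow_const _ _ (Or.inr hp.le))
    exact h2.tendsto.comp h1
  rw [tendsto_order]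
  constructor
  · intro e he
    filter_upwards [(tendsto_order.1 hT).1 e he, self_mem_nhdsWithin] with z h1 h2
    exact lt_of_lt_of_le h1 (single_le_vpE p f h2)
  · intro e he
    obtain ⟨m, hTm, hme⟩ := exists_between he
    have hmtop : m ≠ ⊤ := ne_top_of_lt hme
    have hcont : Tendsto (fun t : ℝ => ENNReal.ofReal ((|f x - c| + t) ^ p)) (𝓝[>] (0 : ℝ))
        (𝓝 (ENNReal.ofReal (|f x - c| ^ p))) := by
      have hca : ContinuousAt (fun t : ℝ => ENNReal.ofReal ((|f x - c| + t) ^ p)) 0 := by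
        apply ENNReal.continuous_ofReal.continuousAt.comp
        exact (Real.continuousAt_rpow_const _ _ (Or.inr hp.le)).comp
          (continuous_const.add continuous_id).continuousAt
      have h0 := hca.tendsto.mono_left (nhdsWithin_le_nhds : 𝓝[>] (0 : ℝ) ≤ 𝓝 0)
      simpa using h0
    obtain ⟨δ, hδpos, hδ⟩ : ∃ δ : ℝ, 0 < δ ∧ ENNReal.ofReal ((|f x - c| + δ) ^ p) < m := by
      obtain ⟨δ, hδ1, hδ2⟩ :=
        (((tendsto_order.1 hcont).2 m hTm).and self_mem_nhdsWithin).exists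
      exact ⟨δ, hδ2, hδ1⟩
    have hem : (0 : ℝ≥0∞) < e - m := tsub_pos_iff_lt.2 hme
    have hev1 : ∀ᶠ z in 𝓝[<] x, L - V z < e - m := (tendsto_order.1 htendD).2 _ hem
    have hev2 : ∀ᶠ z in 𝓝[<] x, |f z - c| ≤ δ := by
      filter_upwards [Metric.tendsto_nhds.1 hc δ hδpos] with z hz
      rw [Real.dist_eq] at hz
      exact hz.le
    have hev : ∀ᶠ z in 𝓝[<] x,
        (L - V z < e - m ∧ |f z - c| ≤ δ ∧ z ∈ Set.Ioo a x) :=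
      hev1.and (hev2.and (eventually_of_mem hIoo fun z hz => hz))
    obtain ⟨w, hwx, hsub⟩ := mem_nhdsLT_iff_exists_Ioo_subset.1 hev
    filter_upwards [Ioo_mem_nhdsLT hwx] with z hz
    obtain ⟨hzD, hzδ, hzm⟩ := hsub hz
    have hbound : vpE p f z x ≤ (L - V z) + ENNReal.ofReal ((|f x - c| + δ) ^ p) := by
      refine (vpE_last p f hz.2).trans ?_
      refine iSup₂_le fun u hu => ?_
      have huz : u ∈ Set.Ioo w x := ⟨lt_of_lt_of_le hz.1 hu.1, hu.2⟩
      obtain ⟨huD, huδ, hum⟩ := hsub huz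
      have hjump : ENNReal.ofReal (|f x - f u| ^ p)
          ≤ ENNReal.ofReal ((|f x - c| + δ) ^ p) := by
        apply ENNReal.ofReal_le_ofReal
        apply Real.rpow_le_rpow (abs_nonneg _) _ hp.le
        calc |f x - f u| ≤ |f x - c| + |c - f u| := abs_sub_le _ _ _
          _ ≤ |f x - c| + δ := by
            have h5 : |c - f u| = |f u - c| := abs_sub_comm _ _
            linarith [huδ]
      rcases eq_or_lt_of_le hu.1 with rfl | hzu
      · rw [vpE_self]
        simpa using add_le_add (zero_le (a := L - V z)) hjump
      · exact add_le_add (hkey hzm hu.2 hzu) hjump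
    calc vpE p f z x ≤ (L - V z) + ENNReal.ofReal ((|f x - c| + δ) ^ p) := hbound
      _ < (e - m) + m := ENNReal.add_lt_add hzD hδ
      _ = e := tsub_add_cancel_of_le hme.le

/-- if `f` has bounded `p`-variation on `[a,b]` (hence is regulated), then for
`x ∈ (a,b]` one has `lim_{z↑x} v_p(f;[z,x]) = |f(x) - f(x-)|^p`, and for `y ∈ [a,b)` one has
`lim_{z↓y} v_p(f;[y,z]) = |f(y+) - f(y)|^p`. -/
theorem pVariation_limit_at_jump (a b : ℝ) (hab : a < b) (f : ℝ → ℝ) (p : ℝ) (hp : 0 < p)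
    (hbv : vpE p f a b < ⊤) :
    (∀ x ∈ Set.Ioc a b,
      Tendsto (fun z => vpE p f z x) (𝓝[<] x)
        (𝓝 (ENNReal.ofReal (|f x - leftLim f x| ^ p)))) ∧
    (∀ y ∈ Set.Ico a b,
      Tendsto (fun z => vpE p f y z) (𝓝[>] y)
        (𝓝 (ENNReal.ofReal (|rightLim f y - f y| ^ p)))) := by
  constructor
  · intro x hx
    have hbvx : vpE p f a x < ⊤ := by
      rcases eq_or_lt_of_le hx.2 with rfl | hxb
      · exact hbv
      · exact lt_of_le_of_lt (le_trans le_self_add (vpE_superadd p f hx.1 hxb)) hbv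
    obtain ⟨c, hc, htend⟩ := main_left a x hx.1 f p hp hbvx
    have hll : leftLim f x = c :=
      leftLim_eq_of_tendsto hc
    rw [hll]
    exact htend
  · intro y hy
    have h1 : -b < -y := neg_lt_neg hy.2
    have hbvg : vpE p (fun t => f (-t)) (-b) (-y) < ⊤ := by
      rw [vpE_neg p f y b]
      rcases eq_or_lt_of_le hy.1 with rfl | hay
      · exact hbv
      · exact lt_of_le_of_lt (le_trans le_add_self (vpE_superadd p f hay hy.2)) hbv
    obtain ⟨c, hc, htend⟩ := main_left (-b) (-y) h1 (fun t => f (-t)) p hp hbvg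
    have hneg : Tendsto (fun z : ℝ => -z) (𝓝[>] y) (𝓝[<] (-y)) := by
      apply tendsto_nhdsWithin_of_tendsto_nhds_of_eventually_within
      · exact (continuous_neg.tendsto y).mono_left nhdsWithin_le_nhds
      · filter_upwards [eventually_mem_nhdsWithin] with z hz
        exact neg_lt_neg (Set.mem_Ioi.mp hz)
    have hfc : Tendsto f (𝓝[>] y) (𝓝 c) := by
      have h2 := hc.comp hneg
      simpa [Function.comp_def, neg_neg] using h2
    have hrl : rightLim f y = c :=
      rightLim_eq_of_tendsto hfc
    have h3 := htend.comp hneg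
    have h4 : Tendsto (fun z => vpE p f y z) (𝓝[>] y)
        (𝓝 (ENNReal.ofReal (|f y - c| ^ p))) := by
      refine Tendsto.congr (fun z => ?_) (by simpa [Function.comp_def, neg_neg] using h3)
      exact vpE_neg p f y z
    rw [hrl, abs_sub_comm]
    exact h4
end

section
/- Let f : [0,T] → ℝ be right-continuous and regulated, let 0 < p < ∞, and let D ⊆ [0,T] be a dense subset containing 0 and T. Then v_p(f;[0,T]) = sup{ ∑_{i=1}^n |f(x_i) - f(x_{i-1})|^p : 0 = x₀ < x₁ < ⋯ < x_n = T, x_i ∈ D for all i }. -/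
open Function Set Filter Topology
open scoped ENNReal

/-- for a right-continuous regulated function `f` on `[0,T]`, a dense subset
`D ⊆ [0,T]` containing `0` and `T`, and `0 < p < ∞`, the `p`-variation of `f` on `[0,T]`
equals the supremum of partition sums over partitions whose points all lie in `D`. -/
theorem pVariation_dense_partitions (T : ℝ) (hT : 0 < T) (f : ℝ → ℝ) (p : ℝ) (hp : 0 < p)
    (D : Set ℝ) (hD : D ⊆ Set.Icc 0 T) (hdense : Set.Icc 0 T ⊆ closure D)
    (h0D : (0 : ℝ) ∈ D) (hTD : T ∈ D)
    (hrc : ∀ t ∈ Set.Ico (0 : ℝ) T, Tendsto f (𝓝[>] t) (𝓝 (f t)))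
    (hreg : ∀ t ∈ Set.Ioc (0 : ℝ) T, ∃ l, Tendsto f (𝓝[<] t) (𝓝 l)) :
    vpE p f 0 T =
      ⨆ (n : ℕ) (t : ℕ → ℝ) (_ : t 0 = 0) (_ : t n = T)
        (_ : ∀ i < n, t i < t (i + 1)) (_ : ∀ i ≤ n, t i ∈ D),
        ENNReal.ofReal (∑ i ∈ Finset.range n, |f (t (i + 1)) - f (t i)| ^ p) := by
  apply le_antisymm
  · -- hard direction: every partition sum is ≤ the D-partition sup
    refine iSup_le fun n => iSup_le fun t => iSup_le fun h0 => iSup_le fun hn =>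
      iSup_le fun hmono => ?_
    -- n > 0
    rcases Nat.eq_zero_or_pos n with hn0 | hn0
    · exfalso; rw [hn0] at hn; rw [h0] at hn; linarith
    -- monotonicity
    have hlt : ∀ i j, i < j → j ≤ n → t i < t j := by
      intro i j hij hjn
      induction j with
      | zero => omega
      | succ m ih =>
        rcases Nat.lt_or_ge i m with h | h
        · exact (ih h (by omega)).trans (hmono m (by omega))
        · have hi : i = m := by omega
          subst hi; exact hmono i (by omega)
    have hle : ∀ i j, i ≤ j → j ≤ n → t i ≤ t j := by
      intro i j hij hjn
      rcases Nat.lt_or_ge i j with h | h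
      · exact (hlt i j h hjn).le
      · have : i = j := by omega
        simp [this]
    have htmem : ∀ i ≤ n, t i ∈ Set.Icc 0 T := by
      intro i hi
      constructor
      · rw [← h0]; exact hle 0 i (Nat.zero_le _) hi
      · rw [← hn]; exact hle i n hi le_rfl
    -- dense pick
    have hpick : ∀ a b : ℝ, 0 ≤ a → b ≤ T → a < b → ∃ x ∈ D, x ∈ Set.Ioo a b := by
      intro a b ha hb hab
      have hm : (a + b) / 2 ∈ Set.Icc 0 T := ⟨by linarith, by linarith⟩
      have hcl := hdense hm
      rw [mem_closure_iff] at hcl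
      obtain ⟨x, hx1, hx2⟩ := hcl (Set.Ioo a b) isOpen_Ioo ⟨by linarith, by linarith⟩
      exact ⟨x, hx2, hx1⟩
    have hex : ∀ k i : ℕ, ∃ x : ℝ,
        (0 < i ∧ i < n) →
          x ∈ D ∧ x ∈ Set.Ioo (t i) (min (t i + 1 / (k + 1 : ℝ)) (t (i + 1))) := by
      intro k i
      by_cases h : 0 < i ∧ i < n
      · obtain ⟨hi0, hin⟩ := h
        have h1 : (0 : ℝ) ≤ t i := (htmem i hin.le).1
        have h2 : min (t i + 1 / (k + 1 : ℝ)) (t (i + 1)) ≤ T :=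
          (min_le_right _ _).trans (htmem (i + 1) hin).2
        have h3 : t i < min (t i + 1 / (k + 1 : ℝ)) (t (i + 1)) := by
          apply lt_min
          · have : (0 : ℝ) < 1 / (k + 1 : ℝ) := by positivity
            linarith
          · exact hmono i hin
        obtain ⟨x, hx⟩ := hpick _ _ h1 h2 h3
        exact ⟨x, fun _ => hx⟩
      · exact ⟨0, fun hc => absurd hc h⟩
    choose g hg using hex
    set s : ℕ → ℕ → ℝ := fun k i => if i = 0 then 0 else if n ≤ i then T else g k i with hs
    have hs0 : ∀ k, s k 0 = 0 := fun k => by simp [hs]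
    have hsn : ∀ k, s k n = T := by
      intro k
      have hne : n ≠ 0 := by omega
      simp [hs, hne]
    have hsint : ∀ k i, 0 < i → i < n →
        s k i ∈ D ∧ s k i ∈ Set.Ioo (t i) (min (t i + 1 / (k + 1 : ℝ)) (t (i + 1))) := by
      intro k i hi0 hin
      have h1 : i ≠ 0 := by omega
      have h2 : ¬ n ≤ i := by omega
      have : s k i = g k i := by simp [hs, h1, h2]
      rw [this]; exact hg k i ⟨hi0, hin⟩
    have hsD : ∀ k, ∀ i ≤ n, s k i ∈ D := by
      intro k i hi
      rcases Nat.eq_zero_or_pos i with h | h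
      · subst h; rw [hs0]; exact h0D
      rcases Nat.lt_or_ge i n with h2 | h2
      · exact (hsint k i h h2).1
      · have : i = n := by omega
        subst this; rw [hsn]; exact hTD
    have hsmono : ∀ k, ∀ i < n, s k i < s k (i + 1) := by
      intro k i hin
      rcases Nat.eq_zero_or_pos i with h | h
      · subst h
        rw [hs0]
        rcases Nat.lt_or_ge 1 n with h2 | h2
        · have h3 := (hsint k 1 one_pos h2).2.1
          have h4 : t 0 < t 1 := hmono 0 hn0
          rw [h0] at h4
          show (0 : ℝ) < s k 1
          linarith
        · show (0 : ℝ) < s k 1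
          rw [(by omega : (1 : ℕ) = n), hsn]
          exact hT
      rcases Nat.lt_or_ge (i + 1) n with h2 | h2
      · have hi1 := (hsint k i h hin).2
        have hi2 := (hsint k (i + 1) (by omega) h2).2
        calc s k i < t (i + 1) := lt_of_lt_of_le hi1.2 (min_le_right _ _)
          _ < s k (i + 1) := hi2.1
      · have : i + 1 = n := by omega
        rw [this, hsn]
        have hi1 := (hsint k i h hin).2
        calc s k i < t (i + 1) := lt_of_lt_of_le hi1.2 (min_le_right _ _)
          _ ≤ T := (htmem (i + 1) (by omega)).2
    -- convergence of f at each point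
    have hf : ∀ i ≤ n, Tendsto (fun k => f (s k i)) atTop (𝓝 (f (t i))) := by
      intro i hi
      rcases Nat.eq_zero_or_pos i with h | h
      · subst h
        simp only [hs0, ← h0]
        exact tendsto_const_nhds
      rcases Nat.lt_or_ge i n with h2 | h2
      · -- interior: right limit
        have hIco : t i ∈ Set.Ico (0 : ℝ) T := ⟨(htmem i h2.le).1, by
          have := hlt i n h2 le_rfl; rw [hn] at this; exact this⟩
        have htends : Tendsto (fun k => s k i) atTop (𝓝[>] (t i)) := by
          apply tendsto_nhdsWithin_of_tendsto_nhds_of_eventually_within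
          · have hub : Tendsto (fun k : ℕ => t i + 1 / (k + 1 : ℝ)) atTop (𝓝 (t i)) := by
              have := (tendsto_one_div_add_atTop_nhds_zero_nat :
                Tendsto (fun n : ℕ => 1 / ((n : ℝ) + 1)) atTop (𝓝 0))
              have h' := tendsto_const_nhds (x := t i) (f := atTop (α := ℕ)) |>.add this
              simpa using h'
            apply tendsto_of_tendsto_of_tendsto_of_le_of_le tendsto_const_nhds hub
            · intro k; exact ((hsint k i h h2).2.1).le
            · intro k
              exact le_trans ((hsint k i h h2).2.2).le (min_le_left _ _)
          · filter_upwards with k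
            exact (hsint k i h h2).2.1
        exact (hrc (t i) hIco).comp htends
      · have : i = n := by omega
        subst this
        simp only [hsn, ← hn]
        exact tendsto_const_nhds
    -- convergence of the sums
    have hsum : Tendsto
        (fun k => ∑ i ∈ Finset.range n, |f (s k (i + 1)) - f (s k i)| ^ p) atTop
        (𝓝 (∑ i ∈ Finset.range n, |f (t (i + 1)) - f (t i)| ^ p)) := by
      apply tendsto_finset_sum
      intro i hi
      have hi' : i < n := Finset.mem_range.mp hi
      have h1 := hf i hi'.le
      have h2 := hf (i + 1) hi'
      have habs : Tendsto (fun k => |f (s k (i + 1)) - f (s k i)|) atTop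
          (𝓝 |f (t (i + 1)) - f (t i)|) := (h2.sub h1).abs
      exact ((Real.continuousAt_rpow_const _ p (Or.inr hp.le)).tendsto.comp habs)
    have hofReal : Tendsto
        (fun k => ENNReal.ofReal (∑ i ∈ Finset.range n, |f (s k (i + 1)) - f (s k i)| ^ p))
        atTop
        (𝓝 (ENNReal.ofReal (∑ i ∈ Finset.range n, |f (t (i + 1)) - f (t i)| ^ p))) :=
      (ENNReal.continuous_ofReal.tendsto _).comp hsum
    refine le_of_tendsto hofReal ?_
    filter_upwards with k
    exact le_iSup_of_le n (le_iSup_of_le (s k) (le_iSup_of_le (hs0 k) (le_iSup_of_le (hsn k)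
      (le_iSup_of_le (hsmono k) (le_iSup_of_le (hsD k) le_rfl)))))
  · -- easy direction
    refine iSup_le fun n => iSup_le fun t => iSup_le fun h0 => iSup_le fun hn =>
      iSup_le fun hmono => iSup_le fun _ => ?_
    exact le_iSup_of_le n (le_iSup_of_le t (le_iSup_of_le h0 (le_iSup_of_le hn
      (le_iSup_of_le hmono le_rfl))))
end
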